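/- For every n ∈ ℕ with n ≥ 1 and all θ, θ* > 0, all the integrals below converge absolutely and ∫₀^∞ (e^{−x/θ}/θ) [ ∫₀¹ u^{−1} ((x(1−u))^n − x^n)/n! du + ∫₀^∞ u^{−1} e^{−u} ((x + u θ*)^n − x^n)/n! du ] dx = ∫₀¹ u^{−1} [ ((1−u)θ + u θ*)^n − θ^n ] du. Moreover, both sides equal θ^n ∫₀¹ u^{−1}((1−u)^n − 1) du + ∑_{k=1}^{n} θ^{n−k} (θ*)^k / k. (This is the intertwining, on monomials, of the boundary generator of the continuous harmonic model with the boundary generator of its hidden-parameter model via the exponential kernel.) -/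

import Mathlib

open MeasureTheory Real Set

private lemma geom_key (n : ℕ) (a b u : ℝ) (hu : u ≠ 0) :
    u⁻¹ * (((1 - u) * a + u * b) ^ n - a ^ n)
      = ∑ j ∈ Finset.range n, (b - a) * (((1 - u) * a + u * b) ^ j * a ^ (n - 1 - j)) := by
  have h := geom_sum₂_mul ((1 - u) * a + u * b) a n
  rw [← Finset.mul_sum, ← h]
  field_simp
  ring

private lemma poly_integrableOn_Ioo {f : ℝ → ℝ} (hf : Continuous f) :
    IntegrableOn f (Set.Ioo (0:ℝ) 1) volume :=
  (hf.integrableOn_Icc (a := 0) (b := 1)).mono_set Set.Ioo_subset_Icc_self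

private lemma integral_affine_pow (j : ℕ) (a b : ℝ) :
    ∫ u in Set.Ioo (0:ℝ) 1, (b - a) * ((1 - u) * a + u * b) ^ j
      = (b ^ (j + 1) - a ^ (j + 1)) / (j + 1) := by
  have hc : Continuous fun u : ℝ => (b - a) * ((1 - u) * a + u * b) ^ j := by fun_prop
  have hderiv : ∀ u ∈ Set.uIcc (0:ℝ) 1,
      HasDerivAt (fun u : ℝ => ((1 - u) * a + u * b) ^ (j + 1) / ((j : ℝ) + 1))
        ((b - a) * ((1 - u) * a + u * b) ^ j) u := by
    intro u _
    have h1 : HasDerivAt (fun u : ℝ => a + u * (b - a)) (b - a) u := by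
      simpa using ((hasDerivAt_id u).mul_const (b - a)).const_add a
    have h0 : HasDerivAt (fun u : ℝ => (1 - u) * a + u * b) (b - a) u :=
      h1.congr_of_eventuallyEq (Filter.Eventually.of_forall fun v => by ring)
    have h2 := (h0.pow (j + 1)).div_const ((j : ℝ) + 1)
    refine h2.congr_deriv ?_
    have hne : ((j : ℝ) + 1) ≠ 0 := by positivity
    simp only [Nat.add_sub_cancel]
    push_cast
    field_simp
  rw [← integral_Ioc_eq_integral_Ioo, ← intervalIntegral.integral_of_le zero_le_one,
    intervalIntegral.integral_eq_sub_of_hasDerivAt hderiv (hc.intervalIntegrable 0 1)]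
  norm_num
  ring

private lemma integrable_gen (n : ℕ) (a b : ℝ) :
    IntegrableOn (fun u : ℝ => u⁻¹ * (((1 - u) * a + u * b) ^ n - a ^ n)) (Set.Ioo 0 1) volume := by
  refine (poly_integrableOn_Ioo (f := fun u => ∑ j ∈ Finset.range n,
    (b - a) * (((1 - u) * a + u * b) ^ j * a ^ (n - 1 - j))) (by fun_prop)).congr_fun ?_
    measurableSet_Ioo
  exact fun u hu => (geom_key n a b u (ne_of_gt hu.1)).symm

private lemma integral_gen (n : ℕ) (a b : ℝ) :
    ∫ u in Set.Ioo (0:ℝ) 1, u⁻¹ * (((1 - u) * a + u * b) ^ n - a ^ n)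
      = ∑ j ∈ Finset.range n, (b ^ (j + 1) - a ^ (j + 1)) / ((j : ℝ) + 1) * a ^ (n - 1 - j) := by
  rw [setIntegral_congr_fun measurableSet_Ioo
      (fun u (hu : u ∈ Set.Ioo (0:ℝ) 1) => geom_key n a b u (ne_of_gt hu.1))]
  rw [integral_finset_sum _ fun j _ => poly_integrableOn_Ioo (by fun_prop)]
  refine Finset.sum_congr rfl fun j _ => ?_
  have hfe : (fun u : ℝ => (b - a) * (((1 - u) * a + u * b) ^ j * a ^ (n - 1 - j)))
      = fun u : ℝ => ((b - a) * ((1 - u) * a + u * b) ^ j) * a ^ (n - 1 - j) := by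
    funext u; ring
  rw [hfe, integral_mul_const, integral_affine_pow]

private lemma integrable_exp_pow (m : ℕ) :
    IntegrableOn (fun u : ℝ => Real.exp (-u) * u ^ m) (Set.Ioi 0) volume := by
  refine (Real.GammaIntegral_convergent (s := (m : ℝ) + 1) (by positivity)).congr_fun
    (fun x hx => ?_) measurableSet_Ioi
  simp only [add_sub_cancel_right, Real.rpow_natCast]

private lemma integral_exp_pow (m : ℕ) :
    ∫ u in Set.Ioi (0:ℝ), Real.exp (-u) * u ^ m = m.factorial := by
  rw [show ((m.factorial : ℝ)) = Real.Gamma ((m : ℝ) + 1) from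
      (Real.Gamma_nat_eq_factorial m).symm,
    Real.Gamma_eq_integral (by positivity)]
  refine (setIntegral_congr_fun measurableSet_Ioi (fun x hx => ?_)).symm
  rw [add_sub_cancel_right, Real.rpow_natCast]

private lemma moment_pointwise {θ : ℝ} (hθ : 0 < θ) (m : ℕ) (x : ℝ) :
    (θ ^ m / θ) * (Real.exp (-(θ⁻¹ * x)) * (θ⁻¹ * x) ^ m) = Real.exp (-x / θ) / θ * x ^ m := by
  have hne : θ ≠ 0 := ne_of_gt hθ
  have h1 : -(θ⁻¹ * x) = -x / θ := by ring
  rw [h1, mul_pow]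
  field_simp
  ring
  rw [← mul_pow, mul_inv_cancel₀ hne, one_pow, one_mul]

private lemma integrable_moment {θ : ℝ} (hθ : 0 < θ) (m : ℕ) :
    IntegrableOn (fun x : ℝ => Real.exp (-x / θ) / θ * x ^ m) (Set.Ioi 0) volume := by
  have h0 : IntegrableOn (fun u : ℝ => Real.exp (-u) * u ^ m) (Set.Ioi (θ⁻¹ * 0)) volume := by
    simpa using integrable_exp_pow m
  have h1 : IntegrableOn (fun x : ℝ => Real.exp (-(θ⁻¹ * x)) * (θ⁻¹ * x) ^ m)
      (Set.Ioi 0) volume :=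
    (integrableOn_Ioi_comp_mul_left_iff (fun u : ℝ => Real.exp (-u) * u ^ m) 0
      (inv_pos.mpr hθ)).mpr h0
  have h2 : IntegrableOn (fun x : ℝ => (θ ^ m / θ) * (Real.exp (-(θ⁻¹ * x)) * (θ⁻¹ * x) ^ m))
      (Set.Ioi 0) volume := h1.const_mul (θ ^ m / θ)
  exact h2.congr_fun (fun x _ => moment_pointwise hθ m x) measurableSet_Ioi

private lemma integral_moment {θ : ℝ} (hθ : 0 < θ) (m : ℕ) :
    ∫ x in Set.Ioi (0:ℝ), Real.exp (-x / θ) / θ * x ^ m = m.factorial * θ ^ m := by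
  have hne : θ ≠ 0 := ne_of_gt hθ
  rw [← setIntegral_congr_fun measurableSet_Ioi (fun x _ => moment_pointwise hθ m x),
    integral_const_mul]
  have h2 := integral_comp_mul_left_Ioi (fun u : ℝ => Real.exp (-u) * u ^ m) 0
    (inv_pos.mpr hθ)
  simp only [mul_zero] at h2
  rw [h2, integral_exp_pow, inv_inv, smul_eq_mul]
  field_simp

private lemma expand_eq (n : ℕ) (x c u : ℝ) (hu : u ≠ 0) :
    u⁻¹ * ((x + u * c) ^ n - x ^ n)
      = ∑ k ∈ Finset.Icc 1 n, (n.choose k : ℝ) * x ^ (n - k) * c ^ k * u ^ (k - 1) := by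
  rw [add_comm x (u * c), add_pow, Finset.sum_range_succ']
  simp only [pow_zero, Nat.sub_zero, Nat.choose_zero_right, Nat.cast_one, one_mul, mul_one]
  rw [add_sub_cancel_right, ← Finset.Ico_add_one_right_eq_Icc, Finset.sum_Ico_eq_sum_range]
  simp only [Nat.succ_sub_one, Nat.add_sub_cancel]
  rw [Finset.mul_sum]
  refine Finset.sum_congr rfl fun i _ => ?_
  have h1 : 1 + i = i + 1 := by omega
  rw [h1]
  simp only [Nat.add_sub_cancel]
  rw [mul_pow, pow_succ]
  field_simp

private lemma choose_fact (n k : ℕ) (hk : 1 ≤ k) (hkn : k ≤ n) :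
    (n.choose k : ℝ) * (k - 1).factorial / n.factorial = 1 / (k * (n - k).factorial) := by
  have hnat : n.choose k * ((k - 1).factorial * (k * (n - k).factorial)) = n.factorial := by
    rw [← Nat.choose_mul_factorial_mul_factorial hkn, ← Nat.mul_factorial_pred (by omega : k ≠ 0)]
    ring
  have h1 : (n.factorial : ℝ) ≠ 0 := Nat.cast_ne_zero.mpr n.factorial_ne_zero
  have h2 : (k : ℝ) ≠ 0 := Nat.cast_ne_zero.mpr (by omega)
  have h3 : ((n - k).factorial : ℝ) ≠ 0 := Nat.cast_ne_zero.mpr (n - k).factorial_ne_zero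
  field_simp
  exact_mod_cast (by rw [← hnat]; ring :
    n.choose k * (k - 1).factorial * k * (n - k).factorial = n.factorial)

private lemma B_eqOn (n : ℕ) (θs x : ℝ) :
    Set.EqOn (fun u : ℝ => u⁻¹ * Real.exp (-u) * (((x + u * θs) ^ n - x ^ n) / n.factorial))
      (fun u : ℝ => ∑ k ∈ Finset.Icc 1 n,
        ((n.choose k : ℝ) * x ^ (n - k) * θs ^ k / n.factorial) * (Real.exp (-u) * u ^ (k - 1)))
      (Set.Ioi 0) := by
  intro u hu
  have h := expand_eq n x θs u (ne_of_gt hu)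
  simp only
  have h2 : u⁻¹ * Real.exp (-u) * (((x + u * θs) ^ n - x ^ n) / n.factorial)
      = (u⁻¹ * ((x + u * θs) ^ n - x ^ n)) * Real.exp (-u) / n.factorial := by ring
  rw [h2, h, Finset.sum_mul, Finset.sum_div]
  exact Finset.sum_congr rfl fun k hk => by ring

private lemma B_integrable (n : ℕ) (θs x : ℝ) :
    IntegrableOn (fun u : ℝ => u⁻¹ * Real.exp (-u) * (((x + u * θs) ^ n - x ^ n) / n.factorial))
      (Set.Ioi 0) volume := by
  have h : IntegrableOn (fun u : ℝ => ∑ k ∈ Finset.Icc 1 n,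
      ((n.choose k : ℝ) * x ^ (n - k) * θs ^ k / n.factorial) * (Real.exp (-u) * u ^ (k - 1)))
      (Set.Ioi 0) volume :=
    integrable_finset_sum _ fun k _ => (integrable_exp_pow (k - 1)).const_mul _
  exact h.congr_fun (fun u hu => (B_eqOn n θs x hu).symm) measurableSet_Ioi

private lemma B_value (n : ℕ) (θs x : ℝ) :
    ∫ u in Set.Ioi (0:ℝ), u⁻¹ * Real.exp (-u) * (((x + u * θs) ^ n - x ^ n) / n.factorial)
      = ∑ k ∈ Finset.Icc 1 n, θs ^ k / (k * (n - k).factorial) * x ^ (n - k) := by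
  rw [setIntegral_congr_fun measurableSet_Ioi (B_eqOn n θs x),
    integral_finset_sum _ fun k _ => (integrable_exp_pow (k - 1)).const_mul _]
  refine Finset.sum_congr rfl fun k hk => ?_
  rw [integral_const_mul, integral_exp_pow]
  obtain ⟨hk1, hkn⟩ := Finset.mem_Icc.mp hk
  have hcf := choose_fact n k hk1 hkn
  have hgoal : (n.choose k : ℝ) * x ^ (n - k) * θs ^ k / n.factorial * (k - 1).factorial
      = ((n.choose k : ℝ) * (k - 1).factorial / n.factorial) * (x ^ (n - k) * θs ^ k) := by
    ring
  rw [hgoal, hcf]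
  ring

private lemma A_funeq (n : ℕ) (x : ℝ) :
    (fun u : ℝ => u⁻¹ * (((x * (1 - u)) ^ n - x ^ n) / n.factorial))
      = fun u : ℝ => (x ^ n / n.factorial) * (u⁻¹ * ((1 - u) ^ n - 1)) := by
  funext u
  rw [mul_pow]
  ring

private lemma c_integrable (n : ℕ) :
    IntegrableOn (fun u : ℝ => u⁻¹ * ((1 - u) ^ n - 1)) (Set.Ioo 0 1) volume := by
  have h := integrable_gen n 1 0
  simpa using h

private lemma c_value (n : ℕ) :
    ∫ u in Set.Ioo (0:ℝ) 1, u⁻¹ * ((1 - u) ^ n - 1)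
      = -∑ j ∈ Finset.range n, (1 : ℝ) / (j + 1) := by
  have h := integral_gen n 1 0
  simp only [mul_one, mul_zero, add_zero, one_pow] at h
  rw [h, ← Finset.sum_neg_distrib]
  refine Finset.sum_congr rfl fun j _ => ?_
  rw [zero_pow (Nat.succ_ne_zero j)]
  ring

private lemma key_identity (n : ℕ) (θ θs : ℝ) :
    ∑ j ∈ Finset.range n, (θs ^ (j + 1) - θ ^ (j + 1)) / ((j : ℝ) + 1) * θ ^ (n - 1 - j)
      = θ ^ n * (-∑ j ∈ Finset.range n, (1 : ℝ) / (j + 1))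
        + ∑ k ∈ Finset.Icc 1 n, θ ^ (n - k) * θs ^ k / k := by
  rw [← Finset.Ico_add_one_right_eq_Icc, Finset.sum_Ico_eq_sum_range]
  simp only [Nat.add_sub_cancel]
  rw [mul_neg, Finset.mul_sum, neg_add_eq_sub, ← Finset.sum_sub_distrib]
  refine Finset.sum_congr rfl fun j hj => ?_
  have hj' : j < n := Finset.mem_range.mp hj
  have h1 : 1 + j = j + 1 := by omega
  rw [h1]
  have e1 : n - 1 - j = n - (j + 1) := by omega
  have e2 : θ ^ n = θ ^ (n - (j + 1)) * θ ^ (j + 1) := by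
    rw [← pow_add]; congr 1; omega
  rw [e1, e2]
  have hne : ((j : ℝ) + 1) ≠ 0 := by positivity
  push_cast
  field_simp

/-- Intertwining, on the monomials `x^n/n!`, of the boundary generator of the continuous
harmonic model with the boundary generator of its hidden-parameter model via the
exponential kernel.  All integrals converge absolutely, the exponential average of the
boundary generator equals the hidden-parameter expression, and both equal the displayed
closed form. -/
theorem harmonic_boundary_intertwining (n : ℕ) (hn : 1 ≤ n) (θ θs : ℝ)
    (hθ : 0 < θ) (hθs : 0 < θs) :
    (∀ x : ℝ, 0 ≤ x →
      IntegrableOn (fun u : ℝ => u⁻¹ * (((x * (1 - u)) ^ n - x ^ n) / n.factorial))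
        (Set.Ioo 0 1) volume) ∧
    (∀ x : ℝ, 0 ≤ x →
      IntegrableOn (fun u : ℝ => u⁻¹ * Real.exp (-u) * (((x + u * θs) ^ n - x ^ n) / n.factorial))
        (Set.Ioi 0) volume) ∧
    IntegrableOn (fun x : ℝ => (Real.exp (-x / θ) / θ) *
      ((∫ u in Set.Ioo (0:ℝ) 1, u⁻¹ * (((x * (1 - u)) ^ n - x ^ n) / n.factorial)) +
       (∫ u in Set.Ioi (0:ℝ), u⁻¹ * Real.exp (-u) * (((x + u * θs) ^ n - x ^ n) / n.factorial))))
      (Set.Ioi 0) volume ∧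
    IntegrableOn (fun u : ℝ => u⁻¹ * (((1 - u) * θ + u * θs) ^ n - θ ^ n))
      (Set.Ioo 0 1) volume ∧
    IntegrableOn (fun u : ℝ => u⁻¹ * ((1 - u) ^ n - 1)) (Set.Ioo 0 1) volume ∧
    (∫ x in Set.Ioi (0:ℝ), (Real.exp (-x / θ) / θ) *
      ((∫ u in Set.Ioo (0:ℝ) 1, u⁻¹ * (((x * (1 - u)) ^ n - x ^ n) / n.factorial)) +
       (∫ u in Set.Ioi (0:ℝ), u⁻¹ * Real.exp (-u) * (((x + u * θs) ^ n - x ^ n) / n.factorial))))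
      = ∫ u in Set.Ioo (0:ℝ) 1, u⁻¹ * (((1 - u) * θ + u * θs) ^ n - θ ^ n) ∧
    (∫ u in Set.Ioo (0:ℝ) 1, u⁻¹ * (((1 - u) * θ + u * θs) ^ n - θ ^ n))
      = θ ^ n * (∫ u in Set.Ioo (0:ℝ) 1, u⁻¹ * ((1 - u) ^ n - 1)) +
        ∑ k ∈ Finset.Icc 1 n, θ ^ (n - k) * θs ^ k / k := by
  have conj1 : ∀ x : ℝ, 0 ≤ x → IntegrableOn
      (fun u : ℝ => u⁻¹ * (((x * (1 - u)) ^ n - x ^ n) / n.factorial)) (Set.Ioo 0 1) volume := by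
    intro x _
    rw [A_funeq]
    exact (c_integrable n).const_mul _
  have hAval : ∀ x : ℝ, (∫ u in Set.Ioo (0:ℝ) 1, u⁻¹ * (((x * (1 - u)) ^ n - x ^ n) / n.factorial))
      = (x ^ n / n.factorial) * ∫ u in Set.Ioo (0:ℝ) 1, u⁻¹ * ((1 - u) ^ n - 1) := by
    intro x
    rw [A_funeq, integral_const_mul]
  have hFeq : (fun x : ℝ => (Real.exp (-x / θ) / θ) *
      ((∫ u in Set.Ioo (0:ℝ) 1, u⁻¹ * (((x * (1 - u)) ^ n - x ^ n) / n.factorial)) +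
       (∫ u in Set.Ioi (0:ℝ), u⁻¹ * Real.exp (-u) * (((x + u * θs) ^ n - x ^ n) / n.factorial))))
      = fun x : ℝ =>
        ((∫ u in Set.Ioo (0:ℝ) 1, u⁻¹ * ((1 - u) ^ n - 1)) / n.factorial)
            * (Real.exp (-x / θ) / θ * x ^ n)
          + ∑ k ∈ Finset.Icc 1 n, (θs ^ k / (k * (n - k).factorial))
            * (Real.exp (-x / θ) / θ * x ^ (n - k)) := by
    funext x
    rw [hAval x, B_value n θs x, mul_add, Finset.mul_sum]
    congr 1
    · ring
    · exact Finset.sum_congr rfl fun k _ => by ring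
  have hint1 : IntegrableOn (fun x : ℝ =>
      ((∫ u in Set.Ioo (0:ℝ) 1, u⁻¹ * ((1 - u) ^ n - 1)) / n.factorial)
        * (Real.exp (-x / θ) / θ * x ^ n)) (Set.Ioi 0) volume :=
    (integrable_moment hθ n).const_mul _
  have hint2 : IntegrableOn (fun x : ℝ => ∑ k ∈ Finset.Icc 1 n,
      (θs ^ k / (k * (n - k).factorial)) * (Real.exp (-x / θ) / θ * x ^ (n - k)))
      (Set.Ioi 0) volume :=
    integrable_finset_sum _ fun k _ => (integrable_moment hθ (n - k)).const_mul _
  have conj3 : IntegrableOn (fun x : ℝ => (Real.exp (-x / θ) / θ) *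
      ((∫ u in Set.Ioo (0:ℝ) 1, u⁻¹ * (((x * (1 - u)) ^ n - x ^ n) / n.factorial)) +
       (∫ u in Set.Ioi (0:ℝ), u⁻¹ * Real.exp (-u) * (((x + u * θs) ^ n - x ^ n) / n.factorial))))
      (Set.Ioi 0) volume := by
    rw [hFeq]
    exact hint1.add hint2
  have hLHSval : (∫ x in Set.Ioi (0:ℝ), (Real.exp (-x / θ) / θ) *
      ((∫ u in Set.Ioo (0:ℝ) 1, u⁻¹ * (((x * (1 - u)) ^ n - x ^ n) / n.factorial)) +
       (∫ u in Set.Ioi (0:ℝ), u⁻¹ * Real.exp (-u) * (((x + u * θs) ^ n - x ^ n) / n.factorial))))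
      = (∫ u in Set.Ioo (0:ℝ) 1, u⁻¹ * ((1 - u) ^ n - 1)) * θ ^ n
        + ∑ k ∈ Finset.Icc 1 n, θ ^ (n - k) * θs ^ k / k := by
    rw [hFeq, integral_add hint1 hint2, integral_const_mul, integral_moment hθ n,
      integral_finset_sum _ fun k _ => (integrable_moment hθ (n - k)).const_mul _]
    congr 1
    · have hfne : (n.factorial : ℝ) ≠ 0 := Nat.cast_ne_zero.mpr n.factorial_ne_zero
      field_simp
    · refine Finset.sum_congr rfl fun k hk => ?_
      rw [integral_const_mul, integral_moment hθ (n - k)]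
      obtain ⟨hk1, hkn⟩ := Finset.mem_Icc.mp hk
      have h2 : ((n - k).factorial : ℝ) ≠ 0 := Nat.cast_ne_zero.mpr (n - k).factorial_ne_zero
      have h3 : (k : ℝ) ≠ 0 := Nat.cast_ne_zero.mpr (by omega)
      field_simp
  refine ⟨conj1, fun x _ => B_integrable n θs x, conj3, integrable_gen n θ θs,
    c_integrable n, ?_, ?_⟩
  · rw [hLHSval, integral_gen n θ θs, key_identity n θ θs, c_value n]
    ring
  · rw [integral_gen n θ θs, key_identity n θ θs, c_value n]
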